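/- Let 0 < p ≤ q ≤ ∞, b < −1/q (b ≤ 0 if q = ∞), and let (A_j), (B_j) be sequences of quasi-Banach spaces with B_j ↪ A_j uniformly in j. Then ℓ_p((A_j, B_j)_{(1,b),q}) is continuously embedded in (ℓ_p(A_j), ℓ_p(B_j))_{(1,b),q}; that is, for a = (a_j), the inequality (∫₀¹ (t^{−1}(1−log t)^b (∑_j K_p(t, a_j; A_j, B_j)^p)^{1/p})^q dt/t)^{1/q} ≲ (∑_j ‖a_j‖_{(A_j,B_j)_{(1,b),q}}^p)^{1/p} holds. -/

import Mathlib

open MeasureTheory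
open scoped ENNReal

/-- The Peetre K-functional for a couple modelled as an ambient group `A` with two
quasi-norms and the second space given by the additive subgroup `S`. -/
noncomputable def Kfunctional {A : Type*} [AddCommGroup A]
    (N0 N1 : A → ℝ≥0∞) (S : AddSubgroup A) (t : ℝ) (a : A) : ℝ≥0∞ :=
  ⨅ a1 : S, (N0 (a - (a1 : A)) + ENNReal.ofReal t * N1 (a1 : A))

/-- The `K_p`-functional
`K_p(t, a) = inf_{a₁ ∈ S} (N0(a − a₁)^p + t^p N1(a₁)^p)^{1/p}`. -/
noncomputable def KpFunctional (p : ℝ) {A : Type*} [AddCommGroup A]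
    (N0 N1 : A → ℝ≥0∞) (S : AddSubgroup A) (t : ℝ) (a : A) : ℝ≥0∞ :=
  ⨅ a1 : S, ((N0 (a - (a1 : A))) ^ p + (ENNReal.ofReal t) ^ p * (N1 (a1 : A)) ^ p) ^ (1/p)

/-- The quasi-norm of the limiting interpolation space `(A₀, A₁)_{(1,b),q}`:
`(∫₀¹ (t^{−1}(1 + |log t|)^b K(t,a))^q dt/t)^{1/q}`. -/
noncomputable def limInterpNorm {A : Type*} [AddCommGroup A]
    (N0 N1 : A → ℝ≥0∞) (S : AddSubgroup A) (b q : ℝ) (a : A) : ℝ≥0∞ :=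
  (∫⁻ t in Set.Ioo (0:ℝ) 1,
    (ENNReal.ofReal (t⁻¹ * (1 - Real.log t) ^ b) * Kfunctional N0 N1 S t a) ^ q
      * ENNReal.ofReal (t⁻¹)) ^ (1/q)

/-- rpow commutes with suprema of monotone sequences. -/
private lemma rpow_iSup_seq (g : ℕ → ℝ≥0∞) (hg : Monotone g) {r : ℝ} (hr : 0 ≤ r) :
    (⨆ n, g n) ^ r = ⨆ n, g n ^ r := by
  refine (iSup_eq_of_tendsto (fun i j hij => ENNReal.rpow_le_rpow (hg hij) hr) ?_).symm
  exact (ENNReal.continuous_rpow_const.tendsto _).comp (tendsto_atTop_iSup hg)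

/-- Minkowski's inequality for countable sums of nonnegative functions. -/
private lemma lintegral_tsum_rpow_le {α : Type*} [MeasurableSpace α] (μ : Measure α)
    {r : ℝ} (hr : 1 ≤ r) (f : ℕ → α → ℝ≥0∞) (hf : ∀ j, Measurable (f j)) :
    (∫⁻ t, (∑' j, f j t) ^ r ∂μ) ^ (1/r) ≤ ∑' j, (∫⁻ t, f j t ^ r ∂μ) ^ (1/r) := by
  have hr0 : (0:ℝ) < r := lt_of_lt_of_le one_pos hr
  have hmeas : ∀ n : ℕ, Measurable fun t => ∑ j ∈ Finset.range n, f j t :=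
    fun n => Finset.measurable_sum _ fun j _ => hf j
  have hptmono : ∀ t, Monotone fun n => ∑ j ∈ Finset.range n, f j t := fun t m n hmn =>
    Finset.sum_le_sum_of_subset (Finset.range_subset_range.mpr hmn)
  have hfin : ∀ n : ℕ,
      (∫⁻ t, (∑ j ∈ Finset.range n, f j t) ^ r ∂μ) ^ (1/r)
        ≤ ∑ j ∈ Finset.range n, (∫⁻ t, f j t ^ r ∂μ) ^ (1/r) := by
    intro n
    induction n with
    | zero =>
        simp [ENNReal.zero_rpow_of_pos hr0, ENNReal.zero_rpow_of_pos (one_div_pos.mpr hr0), hr0]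
    | succ n ih =>
        calc (∫⁻ t, (∑ j ∈ Finset.range (n+1), f j t) ^ r ∂μ) ^ (1/r)
            ≤ (∫⁻ t, (∑ j ∈ Finset.range n, f j t) ^ r ∂μ) ^ (1/r)
              + (∫⁻ t, f n t ^ r ∂μ) ^ (1/r) := by
              simp only [Finset.sum_range_succ]
              exact ENNReal.lintegral_Lp_add_le (hmeas n).aemeasurable
                (hf n).aemeasurable hr
          _ ≤ _ := by rw [Finset.sum_range_succ]; exact add_le_add ih le_rfl
  have key : ∫⁻ t, (∑' j, f j t) ^ r ∂μ
      = ⨆ n, ∫⁻ t, (∑ j ∈ Finset.range n, f j t) ^ r ∂μ := by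
    have hm2 : ∀ n : ℕ, Measurable fun t => (∑ j ∈ Finset.range n, f j t) ^ r :=
      fun n => ENNReal.continuous_rpow_const.measurable.comp (hmeas n)
    rw [← lintegral_iSup hm2
      (fun m n hmn t => ENNReal.rpow_le_rpow (hptmono t hmn) hr0.le)]
    refine lintegral_congr fun t => ?_
    rw [ENNReal.tsum_eq_iSup_nat, rpow_iSup_seq _ (hptmono t) hr0.le]
  rw [key, rpow_iSup_seq _
    (fun m n hmn => lintegral_mono fun t => ENNReal.rpow_le_rpow (hptmono t hmn) hr0.le)
    (by positivity : (0:ℝ) ≤ 1/r)]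
  exact iSup_le fun n => (hfin n).trans (ENNReal.sum_le_tsum _)

/-- `K_p(t,a) ≤ 2^{1/p} K(t,a)`. -/
private lemma KpFunctional_le {A : Type*} [AddCommGroup A]
    (N0 N1 : A → ℝ≥0∞) (S : AddSubgroup A) {p : ℝ} (hp : 0 < p) (t : ℝ) (a : A) :
    KpFunctional p N0 N1 S t a ≤ 2 ^ (1/p) * Kfunctional N0 N1 S t a := by
  rw [Kfunctional, ENNReal.mul_iInf_of_ne (by simp [ENNReal.rpow_eq_zero_iff])
    (ENNReal.rpow_ne_top_of_nonneg (by positivity) (by norm_num))]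
  refine iInf_mono fun a1 => ?_
  set x := N0 (a - (a1 : A)) with hx
  set y := ENNReal.ofReal t * N1 (a1 : A) with hy
  have hyp : (ENNReal.ofReal t) ^ p * (N1 (a1 : A)) ^ p = y ^ p :=
    (ENNReal.mul_rpow_of_nonneg _ _ hp.le).symm
  calc (x ^ p + (ENNReal.ofReal t) ^ p * (N1 (a1 : A)) ^ p) ^ (1/p)
      = (x ^ p + y ^ p) ^ (1/p) := by rw [hyp]
    _ ≤ (2 * (x + y) ^ p) ^ (1/p) := by
        refine ENNReal.rpow_le_rpow ?_ (by positivity)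
        calc x ^ p + y ^ p
            ≤ (x + y) ^ p + (x + y) ^ p :=
              add_le_add (ENNReal.rpow_le_rpow le_self_add hp.le)
                (ENNReal.rpow_le_rpow le_add_self hp.le)
          _ = 2 * (x + y) ^ p := (two_mul _).symm
    _ = 2 ^ (1/p) * (x + y) := by
        rw [ENNReal.mul_rpow_of_nonneg _ _ (by positivity : (0:ℝ) ≤ 1/p),
          ← ENNReal.rpow_mul, mul_one_div_cancel hp.ne', ENNReal.rpow_one]

theorem ellp_embedding_into_limiting_interpolation
    (p q b : ℝ) (hp : 0 < p) (hpq : p ≤ q) (hb : b < -(1/q))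
    {A : ℕ → Type*} [∀ j, AddCommGroup (A j)]
    (N0 N1 : ∀ j, A j → ℝ≥0∞) (S : ∀ j, AddSubgroup (A j))
    (cEmb : ℝ≥0∞) (hcEmb : cEmb ≠ ⊤)
    (hEmb : ∀ j, ∀ x ∈ S j, N0 j x ≤ cEmb * N1 j x) :
    ∃ C : ℝ≥0∞, C ≠ ⊤ ∧ ∀ a : ∀ j, A j,
      (∫⁻ t in Set.Ioo (0:ℝ) 1,
        (ENNReal.ofReal (t⁻¹ * (1 - Real.log t) ^ b) *
          (∑' j, (KpFunctional p (N0 j) (N1 j) (S j) t (a j)) ^ p) ^ (1/p)) ^ q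
          * ENNReal.ofReal (t⁻¹)) ^ (1/q)
      ≤ C * (∑' j, (limInterpNorm (N0 j) (N1 j) (S j) b q (a j)) ^ p) ^ (1/p) := by
  have hq : 0 < q := hp.trans_le hpq
  have hr1 : (1:ℝ) ≤ q / p := (one_le_div hp).mpr hpq
  have hr0 : (0:ℝ) < q / p := lt_of_lt_of_le one_pos hr1
  refine ⟨2 ^ (1/p),
    ENNReal.rpow_ne_top_of_nonneg (by positivity) (by norm_num), fun a => ?_⟩
  classical
  -- notation
  set w : ℝ → ℝ≥0∞ := fun t => ENNReal.ofReal (t⁻¹ * (1 - Real.log t) ^ b) with hw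
  set u : ℝ → ℝ≥0∞ := fun t => ENNReal.ofReal t⁻¹ with hu
  set K : ℕ → ℝ → ℝ≥0∞ := fun j t => Kfunctional (N0 j) (N1 j) (S j) t (a j) with hKdef
  set F : ℕ → ℝ → ℝ≥0∞ := fun j t => (w t * K j t) ^ p * (u t) ^ (p/q) with hFdef
  -- measurability
  have hwm : Measurable fun t : ℝ => ENNReal.ofReal (t⁻¹ * (1 - Real.log t) ^ b) :=
    (measurable_inv.mul ((measurable_const.sub Real.measurable_log).pow measurable_const)).ennreal_ofReal
  have hum : Measurable u := measurable_inv.ennreal_ofReal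
  have hKmono : ∀ j, Monotone fun t => K j t := by
    intro j t s hts
    refine le_iInf fun a1 => le_trans (iInf_le _ a1) ?_
    gcongr
  have hKm : ∀ j, Measurable fun t => K j t := fun j => (hKmono j).measurable
  have hFm : ∀ j, Measurable (F j) := fun j =>
    (ENNReal.continuous_rpow_const.measurable.comp (hwm.mul (hKm j))).mul
      (ENNReal.continuous_rpow_const.measurable.comp hum)
  -- pointwise bound for the integrand
  have hpt : ∀ t : ℝ,
      (w t * (∑' j, (KpFunctional p (N0 j) (N1 j) (S j) t (a j)) ^ p) ^ (1/p)) ^ q * u t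
        ≤ 2 ^ (q/p) * (∑' j, F j t) ^ (q/p) := by
    intro t
    set X := ∑' j, (K j t) ^ p with hX
    have h1 : ∑' j, (KpFunctional p (N0 j) (N1 j) (S j) t (a j)) ^ p ≤ 2 * X := by
      rw [hX, ← ENNReal.tsum_mul_left]
      refine ENNReal.tsum_le_tsum fun j => ?_
      calc (KpFunctional p (N0 j) (N1 j) (S j) t (a j)) ^ p
          ≤ (2 ^ (1/p) * K j t) ^ p :=
            ENNReal.rpow_le_rpow (KpFunctional_le _ _ _ hp _ _) hp.le
        _ = 2 * (K j t) ^ p := by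
            rw [ENNReal.mul_rpow_of_nonneg _ _ hp.le, ← ENNReal.rpow_mul,
              one_div_mul_cancel hp.ne', ENNReal.rpow_one]
    have h2 : (∑' j, (KpFunctional p (N0 j) (N1 j) (S j) t (a j)) ^ p) ^ (1/p)
        ≤ 2 ^ (1/p) * X ^ (1/p) := by
      calc (∑' j, (KpFunctional p (N0 j) (N1 j) (S j) t (a j)) ^ p) ^ (1/p)
          ≤ (2 * X) ^ (1/p) := ENNReal.rpow_le_rpow h1 (by positivity)
        _ = 2 ^ (1/p) * X ^ (1/p) :=
            ENNReal.mul_rpow_of_nonneg _ _ (by positivity)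
    have hFsum : ∑' j, F j t = ((w t) ^ p * X) * (u t) ^ (p/q) := by
      rw [hFdef, hX]
      simp only [ENNReal.mul_rpow_of_nonneg _ _ hp.le]
      rw [ENNReal.tsum_mul_right, ENNReal.tsum_mul_left]
    calc (w t * (∑' j, (KpFunctional p (N0 j) (N1 j) (S j) t (a j)) ^ p) ^ (1/p)) ^ q * u t
        ≤ (w t * (2 ^ (1/p) * X ^ (1/p))) ^ q * u t := by gcongr
      _ = 2 ^ (q/p) * (∑' j, F j t) ^ (q/p) := by
          rw [hFsum]
          simp only [ENNReal.mul_rpow_of_nonneg _ _ hq.le,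
            ENNReal.mul_rpow_of_nonneg _ _ hr0.le, ← ENNReal.rpow_mul]
          rw [show (1/p) * q = q/p by ring, show p * (q/p) = q by field_simp,
            show (p/q) * (q/p) = 1 by field_simp, ENNReal.rpow_one]
          ring
  -- main estimate
  have h2top : ((2:ℝ≥0∞) ^ (q/p)) ≠ ⊤ :=
    ENNReal.rpow_ne_top_of_nonneg hr0.le (by norm_num)
  calc (∫⁻ t in Set.Ioo (0:ℝ) 1,
        (w t * (∑' j, (KpFunctional p (N0 j) (N1 j) (S j) t (a j)) ^ p) ^ (1/p)) ^ q
          * u t) ^ (1/q)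
      ≤ (∫⁻ t in Set.Ioo (0:ℝ) 1, 2 ^ (q/p) * (∑' j, F j t) ^ (q/p)) ^ (1/q) :=
        ENNReal.rpow_le_rpow (lintegral_mono fun t => hpt t) (by positivity)
    _ = 2 ^ (1/p) *
        ((∫⁻ t in Set.Ioo (0:ℝ) 1, (∑' j, F j t) ^ (q/p)) ^ (1/(q/p))) ^ (1/p) := by
        rw [lintegral_const_mul' _ _ h2top,
          ENNReal.mul_rpow_of_nonneg _ _ (by positivity : (0:ℝ) ≤ 1/q),
          ← ENNReal.rpow_mul, ← ENNReal.rpow_mul,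
          show (q/p) * (1/q) = 1/p by field_simp,
          show (1/(q/p)) * (1/p) = 1/q by rw [one_div_div]; field_simp]
    _ ≤ 2 ^ (1/p) *
        (∑' j, (∫⁻ t in Set.Ioo (0:ℝ) 1, (F j t) ^ (q/p)) ^ (1/(q/p))) ^ (1/p) := by
        gcongr
        exact lintegral_tsum_rpow_le _ hr1 F hFm
    _ = 2 ^ (1/p) * (∑' j, (limInterpNorm (N0 j) (N1 j) (S j) b q (a j)) ^ p) ^ (1/p) := by
        congr 2
        refine tsum_congr fun j => ?_
        have hFr : ∀ t, (F j t) ^ (q/p) = (w t * K j t) ^ q * u t := by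
          intro t
          rw [hFdef]
          simp only [ENNReal.mul_rpow_of_nonneg _ _ hr0.le, ← ENNReal.rpow_mul]
          rw [show p * (q/p) = q by field_simp, show (p/q) * (q/p) = 1 by field_simp,
            ENNReal.rpow_one]
        simp only [hFr]
        rw [limInterpNorm, ← ENNReal.rpow_mul,
          show (1/q) * p = 1/(q/p) by rw [one_div_div]; ring]
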